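/- Let $1 \to A \to E \xrightarrow{p} \mathbb{Z}^n \to 1$ be a central extension of groups in which $E$ is generated by $A$ together with elements $\dot e_1, \dots, \dot e_n$ lifting the standard basis of $\mathbb{Z}^n$. Suppose there is $N \ge 1$ with $\dot e_j^N \in A$ for all $j$, and suppose every element $a \in A$ satisfying $a^N = 1$ is trivial. Then the $\dot e_i$ pairwise commute, $E$ is abelian, and the extension splits: there is a homomorphic section $s : \mathbb{Z}^n \to E$ of $p$. -/

import Mathlib

/-- **Central extensions of `ℤⁿ` with uniquely `N`-divisible obstruction.**
Let `1 → A → E → ℤⁿ → 1` be a central extension in which `E` is generated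
by `A` together with lifts `edot₁, …, edotₙ` of the standard basis.  If there is
`N ≥ 1` with `edotⱼᴺ ∈ A` for all `j` and every `a ∈ A` with `aᴺ = 1` is
trivial, then the `edotᵢ` pairwise commute, `E` is abelian, and the extension
splits: there is a homomorphic section `s : ℤⁿ → E` of `p`. -/
theorem central_extension_of_Zn_splits
    (n : ℕ) (E : Type*) [Group E]
    (A : Subgroup E) (hA : A ≤ Subgroup.center E)
    (p : E →* Multiplicative (Fin n → ℤ))
    (hker : p.ker = A) (hsurj : Function.Surjective p)
    (edot : Fin n → E)
    (hlift : ∀ i, p (edot i) = Multiplicative.ofAdd (Pi.single i 1))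
    (hgen : Subgroup.closure ((A : Set E) ∪ Set.range edot) = ⊤)
    (N : ℕ) (hN : 1 ≤ N)
    (hpow : ∀ j, (edot j) ^ N ∈ A)
    (htor : ∀ a ∈ A, a ^ N = 1 → a = 1) :
    (∀ i j, Commute (edot i) (edot j)) ∧
    (∀ x y : E, x * y = y * x) ∧
    ∃ s : Multiplicative (Fin n → ℤ) →* E,
      ∀ v, p (s v) = v := by
  -- commutators of lifts lie in A, hence are central
  have hcomm : ∀ i j, Commute (edot i) (edot j) := by
    intro i j
    set c := edot i * edot j * (edot i)⁻¹ * (edot j)⁻¹ with hc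
    have hcA : c ∈ A := by
      rw [← hker, MonoidHom.mem_ker]
      have key : ∀ x y : Multiplicative (Fin n → ℤ), x * y * x⁻¹ * y⁻¹ = 1 := by
        intro x y; rw [mul_comm x y]; group
      simp only [hc, map_mul, map_inv]
      exact key _ _
    have hcen : c ∈ Subgroup.center E := hA hcA
    have hcc : Commute c (edot j) := (Subgroup.mem_center_iff.mp hcen (edot j)).symm
    have hconj : edot i * edot j * (edot i)⁻¹ = c * edot j := by
      rw [hc]; group
    have hconjN : edot i * (edot j) ^ N * (edot i)⁻¹ = c ^ N * (edot j) ^ N := by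
      have h1 : (edot i * edot j * (edot i)⁻¹) ^ N = (c * edot j) ^ N := by rw [hconj]
      rw [conj_pow, hcc.mul_pow] at h1
      exact h1
    have hEN : edot i * (edot j) ^ N * (edot i)⁻¹ = (edot j) ^ N := by
      have h := Subgroup.mem_center_iff.mp (hA (hpow j)) (edot i)
      rw [h]; group
    have hcN : c ^ N = 1 := by
      have h2 : c ^ N * (edot j) ^ N = 1 * (edot j) ^ N := by
        rw [one_mul, ← hconjN, hEN]
      exact mul_right_cancel h2
    have hc1 : c = 1 := htor c hcA hcN
    have : edot i * edot j * (edot i)⁻¹ * (edot j)⁻¹ = 1 := hc1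
    unfold Commute SemiconjBy
    calc edot i * edot j = (edot i * edot j * (edot i)⁻¹ * (edot j)⁻¹) * (edot j * edot i) := by
          group
      _ = edot j * edot i := by rw [this, one_mul]
  -- every generator is central, hence E is abelian
  have habel : ∀ x y : E, x * y = y * x := by
    have hgen_cen : ((A : Set E) ∪ Set.range edot) ⊆ Subgroup.center E := by
      rintro x (hx | ⟨i, rfl⟩)
      · exact hA hx
      · simp only [SetLike.mem_coe, Subgroup.mem_center_iff]
        intro g
        have hg : g ∈ Subgroup.closure ((A : Set E) ∪ Set.range edot) := by
          rw [hgen]; trivial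
        induction hg using Subgroup.closure_induction with
        | mem y hy =>
          rcases hy with hy | ⟨j, rfl⟩
          · exact (Subgroup.mem_center_iff.mp (hA hy) (edot i)).symm
          · exact (hcomm i j).symm
        | one => simp
        | mul a b _ _ ha hb => rw [mul_assoc, hb, ← mul_assoc, ha, mul_assoc]
        | inv a _ ha => exact Commute.inv_left ha
    intro x y
    have hx : x ∈ Subgroup.center E := by
      have : Subgroup.closure ((A : Set E) ∪ Set.range edot) ≤ Subgroup.center E :=
        Subgroup.closure_le _ |>.mpr hgen_cen
      exact this (by rw [hgen]; trivial)
    exact (Subgroup.mem_center_iff.mp hx y).symm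
  refine ⟨hcomm, habel, ?_⟩
  letI : CommMonoid E := { (inferInstance : Monoid E) with mul_comm := habel }
  refine ⟨{ toFun := fun v => ∏ i, edot i ^ (Multiplicative.toAdd v i),
            map_one' := ?_, map_mul' := ?_ }, ?_⟩
  · simp
  · intro a b
    simp only [toAdd_mul, Pi.add_apply, zpow_add, Finset.prod_mul_distrib]
  · intro v
    show p (∏ i, edot i ^ (Multiplicative.toAdd v i)) = v
    have : p (∏ i, edot i ^ (Multiplicative.toAdd v i))
        = ∏ i, (Multiplicative.ofAdd (Pi.single i (Multiplicative.toAdd v i))) := by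
      rw [map_prod]
      congr 1
      ext i
      rw [map_zpow, hlift i, ← ofAdd_zsmul]
      congr 1
      rename_i k
      by_cases h : k = i <;> simp [h, Pi.single_apply]
    rw [this]
    have : ∏ i, (Multiplicative.ofAdd (Pi.single i (Multiplicative.toAdd v i)))
        = Multiplicative.ofAdd (∑ i, Pi.single i (Multiplicative.toAdd v i)) := by
      simp
    rw [this, Finset.univ_sum_single]
    simp
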